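/- Let X = {x_1,…,x_n} ⊆ ℝ^d have all pairwise squared distances in A_𝔭 (the localization of O_K at prime 𝔭), and let all coordinates x_{ij} lie in a finite extension L of K with P ⊆ O_L a prime above 𝔭. Set t = max(0, −min_{i,j} ord_P(2 x_{ij})). Then for any vectors a_1,…,a_n with all coordinates in (P B_P)^{t+1}, the perturbed set X' = {x_1 + a_1, …, x_n + a_n} satisfies ‖(x_i+a_i) − (x_j+a_j)‖² ≡ ‖x_i − x_j‖² (mod P B_P) for all i, j. -/

import Mathlib

open IsDedekindDomain NumberField

theorem perturbation_preserves_mod_distances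
    (K L : Type*) [Field K] [NumberField K] [Field L] [NumberField L] [Algebra K L]
    (𝔭 : HeightOneSpectrum (𝓞 K)) (P : HeightOneSpectrum (𝓞 L))
    (hlie : 𝔭.asIdeal = P.asIdeal.comap (algebraMap (𝓞 K) (𝓞 L)))
    (n d : ℕ) (x : Fin n → Fin d → L)
    (hdist : ∀ i j : Fin n, ∃ c : K,
      algebraMap K L c = ∑ k : Fin d, (x i k - x j k) ^ 2 ∧ 𝔭.valuation K c ≤ 1)
    (t : ℕ)
    (ht : ∀ (i : Fin n) (k : Fin d),
      P.valuation L (2 * x i k) ≤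
        ((Multiplicative.ofAdd (t : ℤ) : Multiplicative ℤ) : WithZero (Multiplicative ℤ)))
    (a : Fin n → Fin d → L)
    (ha : ∀ (i : Fin n) (k : Fin d),
      P.valuation L (a i k) ≤
        ((Multiplicative.ofAdd (-(t + 1 : ℤ)) : Multiplicative ℤ) : WithZero (Multiplicative ℤ))) :
    ∀ i j : Fin n,
      P.valuation L ((∑ k : Fin d, ((x i k + a i k) - (x j k + a j k)) ^ 2) -
        ∑ k : Fin d, (x i k - x j k) ^ 2) < 1 := by
  intro i j
  have hsum : (∑ k : Fin d, ((x i k + a i k) - (x j k + a j k)) ^ 2) -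
      ∑ k : Fin d, (x i k - x j k) ^ 2
      = ∑ k : Fin d,
        ((a i k - a j k) * ((2 * x i k - 2 * x j k) + (a i k - a j k))) := by
    rw [← Finset.sum_sub_distrib]
    exact Finset.sum_congr rfl (fun k _ => by ring)
  rw [hsum]
  apply Valuation.map_sum_lt _ (one_ne_zero)
  intro k _
  rw [Valuation.map_mul]
  have hle : ((Multiplicative.ofAdd (-(t + 1 : ℤ)) : Multiplicative ℤ) :
      WithZero (Multiplicative ℤ)) ≤
      ((Multiplicative.ofAdd (t : ℤ) : Multiplicative ℤ) : WithZero (Multiplicative ℤ)) := by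
    rw [WithZero.coe_le_coe, Multiplicative.ofAdd_le]
    omega
  have hb : P.valuation L (a i k - a j k) ≤
      ((Multiplicative.ofAdd (-(t + 1 : ℤ)) : Multiplicative ℤ) : WithZero (Multiplicative ℤ)) :=
    (Valuation.map_sub _ _ _).trans (max_le (ha i k) (ha j k))
  have h2u : P.valuation L (2 * x i k - 2 * x j k + (a i k - a j k)) ≤
      ((Multiplicative.ofAdd (t : ℤ) : Multiplicative ℤ) : WithZero (Multiplicative ℤ)) := by
    refine (Valuation.map_add _ _ _).trans (max_le ?_ (hb.trans hle))
    exact (Valuation.map_sub _ _ _).trans (max_le (ht i k) (ht j k))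
  calc P.valuation L (a i k - a j k) *
        P.valuation L (2 * x i k - 2 * x j k + (a i k - a j k))
      ≤ ((Multiplicative.ofAdd (-(t + 1 : ℤ)) : Multiplicative ℤ) : WithZero (Multiplicative ℤ)) *
        ((Multiplicative.ofAdd (t : ℤ) : Multiplicative ℤ) : WithZero (Multiplicative ℤ)) :=
        mul_le_mul' hb h2u
    _ < 1 := by
        rw [← WithZero.coe_mul, ← WithZero.coe_one, WithZero.coe_lt_coe,
          ← ofAdd_add, ← ofAdd_zero, Multiplicative.ofAdd_lt]
        omega
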